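/- Let V be a finite-dimensional real inner product space and let τ : V → so(V) be linear with τ(X)Y = -τ(Y)X and ⟨τ(X)Y, Z⟩ totally skew-symmetric in X, Y, Z (i.e. τ comes from a 3-form). Define R(X,Y) := [τ(X), τ(Y)] - τ(τ(X)Y) + τ(τ(Y)X). Then the 4-tensor ⟨R(X,Y)Z, W⟩ satisfies the pair symmetry ⟨R(X,Y)Z,W⟩ = ⟨R(Z,W)X,Y⟩. -/
import Mathlib


open scoped RealInnerProductSpace

/-- For a 3-form `τ` on a finite-dimensional real inner product space `V`
(viewed as a linear map `τ : V → so(V)` with `τ X Y = -τ Y X` and `⟪τ X Y, Z⟫` totally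
skew-symmetric), the tensor `R(X,Y) = [τ_X, τ_Y] - τ_{τ_X Y} + τ_{τ_Y X}` satisfies the
pair symmetry `⟪R X Y Z, W⟫ = ⟪R Z W X, Y⟫`. -/
theorem stmt0 {V : Type*} [NormedAddCommGroup V] [InnerProductSpace ℝ V]
    [FiniteDimensional ℝ V]
    (τ : V →ₗ[ℝ] V →ₗ[ℝ] V)
    (hanti : ∀ X Y : V, τ X Y = - τ Y X)
    (hskew : ∀ X Y Z : V, ⟪τ X Y, Z⟫ = - ⟪τ X Z, Y⟫)
    (R : V → V → V →ₗ[ℝ] V)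
    (hR : ∀ X Y : V, R X Y = τ X ∘ₗ τ Y - τ Y ∘ₗ τ X - τ (τ X Y) + τ (τ Y X)) :
    ∀ X Y Z W : V, ⟪R X Y Z, W⟫ = ⟪R Z W X, Y⟫ := by
  have h1 : ∀ A B C D : V, ⟪τ A (τ B C), D⟫ = -⟪τ A D, τ B C⟫ := fun A B C D =>
    hskew A _ D
  have h2 : ∀ A B C D : V, ⟪τ (τ A B) C, D⟫ = ⟪τ C D, τ A B⟫ := by
    intro A B C D
    rw [hanti (τ A B) C, inner_neg_left, hskew, neg_neg,
      real_inner_comm]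
  intro X Y Z W
  simp only [hR, LinearMap.add_apply, LinearMap.sub_apply, LinearMap.comp_apply,
    inner_add_left, inner_sub_left, h1, h2]
  rw [hanti Y X, hanti Z Y, hanti W X, hanti W Y, hanti W Z, hanti Z X]
  simp only [LinearMap.neg_apply, inner_neg_left, inner_neg_right, neg_neg]
  linarith [real_inner_comm (τ X W) (τ Y Z), real_inner_comm (τ Y W) (τ X Z),
    real_inner_comm (τ Z W) (τ X Y)]
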